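/- Let A be a symmetric n×n real matrix and 0 ≤ k ≤ n. Then A is a copositive matrix of exact order k if and only if A is a semimonotone matrix of exact order k; likewise A is a strictly copositive matrix of exact order k if and only if A is a strictly semimonotone matrix of exact order k. -/

import Mathlib

open Matrix

/-- A real square matrix `A` is semimonotone if for every nonzero entrywise-nonnegative
vector `x` there is an index `i` with `x i > 0` and `(A *ᵥ x) i ≥ 0`. -/
def SemiMonotone {ι : Type*} [Fintype ι] (A : Matrix ι ι ℝ) : Prop :=
  ∀ x : ι → ℝ, x ≠ 0 → 0 ≤ x → ∃ i, 0 < x i ∧ 0 ≤ A.mulVec x i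

/-- A real square matrix `A` is strictly semimonotone if for every nonzero
entrywise-nonnegative vector `x` there is an index `i` with `x i > 0` and `(A *ᵥ x) i > 0`. -/
def StrictlySemiMonotone {ι : Type*} [Fintype ι] (A : Matrix ι ι ℝ) : Prop :=
  ∀ x : ι → ℝ, x ≠ 0 → 0 ≤ x → ∃ i, 0 < x i ∧ 0 < A.mulVec x i

/-- The principal submatrix of `A` with rows and columns indexed by `s`. -/
def PrincipalSubmatrix {n : ℕ} (A : Matrix (Fin n) (Fin n) ℝ) (s : Finset (Fin n)) :
    Matrix s s ℝ := A.submatrix (fun i => (i : Fin n)) (fun j => (j : Fin n))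

/-- `A` is a semimonotone matrix of exact order `k` (an `E0_k`-matrix): every principal
submatrix of order `n - k` is semimonotone, but no principal submatrix of order
`r` with `n - k < r ≤ n` is semimonotone. -/
def SemimonotoneExactOrder {n : ℕ} (A : Matrix (Fin n) (Fin n) ℝ) (k : ℕ) : Prop :=
  (∀ s : Finset (Fin n), s.card = n - k → SemiMonotone (PrincipalSubmatrix A s)) ∧
  (∀ s : Finset (Fin n), n - k < s.card → ¬ SemiMonotone (PrincipalSubmatrix A s))

/-- `A` is a strictly semimonotone matrix of exact order `k` (an `E_k`-matrix). -/
def StrictlySemimonotoneExactOrder {n : ℕ} (A : Matrix (Fin n) (Fin n) ℝ) (k : ℕ) : Prop :=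
  (∀ s : Finset (Fin n), s.card = n - k → StrictlySemiMonotone (PrincipalSubmatrix A s)) ∧
  (∀ s : Finset (Fin n), n - k < s.card → ¬ StrictlySemiMonotone (PrincipalSubmatrix A s))

/-- A real square matrix `A` is copositive if `xᵀ A x ≥ 0` for all entrywise-nonnegative `x`. -/
def Copositive {ι : Type*} [Fintype ι] (A : Matrix ι ι ℝ) : Prop :=
  ∀ x : ι → ℝ, 0 ≤ x → 0 ≤ x ⬝ᵥ A.mulVec x

/-- A real square matrix `A` is strictly copositive if `xᵀ A x > 0` for all nonzero
entrywise-nonnegative `x`. -/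
def StrictlyCopositive {ι : Type*} [Fintype ι] (A : Matrix ι ι ℝ) : Prop :=
  ∀ x : ι → ℝ, x ≠ 0 → 0 ≤ x → 0 < x ⬝ᵥ A.mulVec x

/-- `A` is a copositive matrix of exact order `k`. -/
def CopositiveExactOrder {n : ℕ} (A : Matrix (Fin n) (Fin n) ℝ) (k : ℕ) : Prop :=
  (∀ s : Finset (Fin n), s.card = n - k → Copositive (PrincipalSubmatrix A s)) ∧
  (∀ s : Finset (Fin n), n - k < s.card → ¬ Copositive (PrincipalSubmatrix A s))

/-- `A` is a strictly copositive matrix of exact order `k`. -/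
def StrictlyCopositiveExactOrder {n : ℕ} (A : Matrix (Fin n) (Fin n) ℝ) (k : ℕ) : Prop :=
  (∀ s : Finset (Fin n), s.card = n - k → StrictlyCopositive (PrincipalSubmatrix A s)) ∧
  (∀ s : Finset (Fin n), n - k < s.card → ¬ StrictlyCopositive (PrincipalSubmatrix A s))


set_option linter.unusedSectionVars false

section AuxA
variable {ι : Type*} [Fintype ι] [DecidableEq ι]

lemma aux_symm_dot (B : Matrix ι ι ℝ) (hB : B.IsSymm) (x y : ι → ℝ) :
    x ⬝ᵥ B.mulVec y = y ⬝ᵥ B.mulVec x := by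
  rw [Matrix.dotProduct_mulVec, ← Matrix.mulVec_transpose, hB.eq, dotProduct_comm]

lemma aux_cont (B : Matrix ι ι ℝ) : Continuous fun y : ι → ℝ => y ⬝ᵥ B.mulVec y := by
  simp only [dotProduct, Matrix.mulVec]
  exact continuous_finset_sum _ fun i _ =>
    (continuous_apply i).mul (continuous_finset_sum _ fun j _ =>
      (continuous_const.mul (continuous_apply j)))

lemma aux_quad_smul (B : Matrix ι ι ℝ) (c : ℝ) (x : ι → ℝ) :
    (c • x) ⬝ᵥ B.mulVec (c • x) = c ^ 2 * (x ⬝ᵥ B.mulVec x) := by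
  rw [Matrix.mulVec_smul, dotProduct_smul, smul_dotProduct, smul_eq_mul,
    smul_eq_mul]
  ring

lemma aux_min_bound (B : Matrix ι ι ℝ) (hB : B.IsSymm) (z : ι → ℝ)
    (hz : z ∈ stdSimplex ℝ ι)
    (hmin : ∀ y ∈ stdSimplex ℝ ι, z ⬝ᵥ B.mulVec z ≤ y ⬝ᵥ B.mulVec y)
    {i : ι} (hi : 0 < z i) : B.mulVec z i ≤ z ⬝ᵥ B.mulVec z := by
  obtain ⟨hz0, hz1⟩ := hz
  have step1 : ∀ j, B.mulVec z i ≤ B.mulVec z j := by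
    intro j
    rcases eq_or_ne j i with rfl | hij
    · exact le_refl _
    set d : ι → ℝ := Pi.single j 1 - Pi.single i 1 with hd
    set c : ℝ := d ⬝ᵥ B.mulVec z with hc
    set e : ℝ := d ⬝ᵥ B.mulVec d with he
    have hmem : ∀ t ∈ Set.Ioc (0:ℝ) (z i), z + t • d ∈ stdSimplex ℝ ι := by
      intro t ht
      constructor
      · intro l
        rcases eq_or_ne l i with rfl | hli
        · have : d l = -1 := by simp [hd, Pi.single_eq_of_ne (Ne.symm hij)]
          simp only [Pi.add_apply, Pi.smul_apply, smul_eq_mul, this]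
          linarith [ht.2]
        rcases eq_or_ne l j with rfl | hlj
        · have : d l = 1 := by simp [hd, Pi.single_eq_of_ne hli]
          simp only [Pi.add_apply, Pi.smul_apply, smul_eq_mul, this]
          linarith [hz0 l, ht.1]
        · have : d l = 0 := by simp [hd, Pi.single_eq_of_ne hlj, Pi.single_eq_of_ne hli]
          simp only [Pi.add_apply, Pi.smul_apply, smul_eq_mul, this]
          simpa using hz0 l
      · have hs : ∑ l, d l = 0 := by
          simp [hd, Finset.sum_sub_distrib, Finset.sum_pi_single']
        simp only [Pi.add_apply, Pi.smul_apply, smul_eq_mul]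
        rw [Finset.sum_add_distrib, hz1, ← Finset.mul_sum, hs]
        ring
    have hexp : ∀ t : ℝ, (z + t • d) ⬝ᵥ B.mulVec (z + t • d)
        = z ⬝ᵥ B.mulVec z + 2 * t * c + t ^ 2 * e := by
      intro t
      have e1 : z ⬝ᵥ B.mulVec d = c := aux_symm_dot B hB z d
      rw [Matrix.mulVec_add, dotProduct_add, add_dotProduct,
        add_dotProduct, Matrix.mulVec_smul, dotProduct_smul,
        dotProduct_smul, smul_dotProduct, smul_dotProduct,
        smul_eq_mul, smul_eq_mul, smul_eq_mul, smul_eq_mul, e1, ← hc]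
      ring
    have hct : ∀ t ∈ Set.Ioc (0:ℝ) (z i), 0 ≤ 2 * t * c + t ^ 2 * e := by
      intro t ht
      have := hmin _ (hmem t ht)
      rw [hexp t] at this
      linarith
    have hcpos : 0 ≤ c := by
      by_contra hcon
      push_neg at hcon
      have hmax : (0:ℝ) < max e 1 := lt_of_lt_of_le one_pos (le_max_right e 1)
      set t : ℝ := min (z i) (-c / max e 1) with htdef
      have ht0 : 0 < t := lt_min hi (div_pos (neg_pos.mpr hcon) hmax)
      have ht1 : t ≤ z i := min_le_left _ _
      have ht2 : t * max e 1 ≤ -c := (le_div_iff₀ hmax).mp (min_le_right _ _)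
      have h3 := hct t ⟨ht0, ht1⟩
      nlinarith [mul_le_mul_of_nonneg_left (le_max_left e 1) (mul_nonneg ht0.le ht0.le),
        mul_le_mul_of_nonneg_left ht2 ht0.le, mul_pos ht0 (neg_pos.mpr hcon)]
    have hcval : c = B.mulVec z j - B.mulVec z i := by
      rw [hc, hd, sub_dotProduct, single_dotProduct, single_dotProduct]
      ring
    linarith [hcval ▸ hcpos]
  calc B.mulVec z i = (∑ l, z l) * B.mulVec z i := by rw [hz1, one_mul]
    _ = ∑ l, z l * B.mulVec z i := by rw [Finset.sum_mul]
    _ ≤ ∑ l, z l * B.mulVec z l :=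
        Finset.sum_le_sum fun l _ => mul_le_mul_of_nonneg_left (step1 l) (hz0 l)
    _ = z ⬝ᵥ B.mulVec z := rfl

end AuxA

section AuxB
variable {ι : Type*} [Fintype ι] [DecidableEq ι]

lemma aux_pos_entry {x : ι → ℝ} (hx0 : x ≠ 0) (hx : 0 ≤ x) : ∃ i, 0 < x i := by
  obtain ⟨i, hi⟩ := Function.ne_iff.mp hx0
  exact ⟨i, lt_of_le_of_ne (hx i) (Ne.symm hi)⟩

lemma aux_cop_to_semi (B : Matrix ι ι ℝ) (h : Copositive B) : SemiMonotone B := by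
  intro x hx0 hx
  by_contra hcon
  push_neg at hcon
  obtain ⟨i, hi⟩ := aux_pos_entry hx0 hx
  have h0 := h x hx
  have hlt : x ⬝ᵥ B.mulVec x < ∑ _l : ι, (0:ℝ) := by
    apply Finset.sum_lt_sum
    · intro l _
      rcases eq_or_lt_of_le (hx l) with hl | hl
      · simp [← hl]
      · exact (mul_neg_of_pos_of_neg hl (hcon l hl)).le
    · exact ⟨i, Finset.mem_univ i, mul_neg_of_pos_of_neg hi (hcon i hi)⟩
  simp only [Finset.sum_const_zero] at hlt
  linarith

lemma aux_scop_to_ssemi (B : Matrix ι ι ℝ) (h : StrictlyCopositive B) :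
    StrictlySemiMonotone B := by
  intro x hx0 hx
  by_contra hcon
  push_neg at hcon
  have h0 := h x hx0 hx
  have hle : x ⬝ᵥ B.mulVec x ≤ 0 := Finset.sum_nonpos fun l _ => by
    rcases eq_or_lt_of_le (hx l) with hl | hl
    · simp [← hl]
    · exact mul_nonpos_iff.mpr (Or.inl ⟨hl.le, hcon l hl⟩)
  linarith

lemma aux_min_exists (B : Matrix ι ι ℝ) [Nonempty ι] :
    ∃ z ∈ stdSimplex ℝ ι, ∀ y ∈ stdSimplex ℝ ι, z ⬝ᵥ B.mulVec z ≤ y ⬝ᵥ B.mulVec y := by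
  obtain ⟨z, hz, hmin⟩ := (isCompact_stdSimplex ℝ ι).exists_isMinOn
    ⟨_, single_mem_stdSimplex ℝ (Classical.arbitrary ι)⟩ (aux_cont B).continuousOn
  exact ⟨z, hz, fun y hy => hmin hy⟩

lemma aux_scale {x : ι → ℝ} (hx0 : x ≠ 0) (hx : 0 ≤ x) :
    ∃ S : ℝ, 0 < S ∧ S⁻¹ • x ∈ stdSimplex ℝ ι := by
  obtain ⟨i, hi⟩ := aux_pos_entry hx0 hx
  refine ⟨∑ l, x l, Finset.sum_pos' (fun l _ => hx l) ⟨i, Finset.mem_univ i, hi⟩, ?_, ?_⟩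
  · intro l
    exact mul_nonneg (inv_nonneg.mpr (Finset.sum_nonneg fun l _ => hx l)) (hx l)
  · simp only [Pi.smul_apply, smul_eq_mul, ← Finset.mul_sum]
    rw [inv_mul_cancel₀]
    exact ne_of_gt (Finset.sum_pos' (fun l _ => hx l) ⟨i, Finset.mem_univ i, hi⟩)

lemma aux_semi_to_cop (B : Matrix ι ι ℝ) (hB : B.IsSymm) (h : SemiMonotone B) :
    Copositive B := by
  intro x hx
  rcases eq_or_ne x 0 with rfl | hx0
  · simp
  have : Nonempty ι := ⟨(aux_pos_entry hx0 hx).choose⟩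
  obtain ⟨z, hz, hmin⟩ := aux_min_exists B
  have hzne : z ≠ 0 := by
    intro hzz
    have := hz.2
    rw [hzz] at this
    simp at this
  obtain ⟨i, hzi, hBzi⟩ := h z hzne (fun l => hz.1 l)
  have hμ : 0 ≤ z ⬝ᵥ B.mulVec z := le_trans hBzi (aux_min_bound B hB z hz hmin hzi)
  obtain ⟨S, hS, hmem⟩ := aux_scale hx0 hx
  have h1 := aux_quad_smul B S⁻¹ x
  have h2 : 0 ≤ (S⁻¹) ^ 2 * (x ⬝ᵥ B.mulVec x) := h1 ▸ le_trans hμ (hmin _ hmem)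
  by_contra hcon
  push_neg at hcon
  have hp : 0 < (S⁻¹) ^ 2 := by positivity
  nlinarith [mul_pos hp (neg_pos.mpr hcon)]

lemma aux_ssemi_to_scop (B : Matrix ι ι ℝ) (hB : B.IsSymm) (h : StrictlySemiMonotone B) :
    StrictlyCopositive B := by
  intro x hx0 hx
  have : Nonempty ι := ⟨(aux_pos_entry hx0 hx).choose⟩
  obtain ⟨z, hz, hmin⟩ := aux_min_exists B
  have hzne : z ≠ 0 := by
    intro hzz
    have := hz.2
    rw [hzz] at this
    simp at this
  obtain ⟨i, hzi, hBzi⟩ := h z hzne (fun l => hz.1 l)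
  have hμ : 0 < z ⬝ᵥ B.mulVec z := lt_of_lt_of_le hBzi (aux_min_bound B hB z hz hmin hzi)
  obtain ⟨S, hS, hmem⟩ := aux_scale hx0 hx
  have h1 := aux_quad_smul B S⁻¹ x
  have h2 : 0 < (S⁻¹) ^ 2 * (x ⬝ᵥ B.mulVec x) := h1 ▸ lt_of_lt_of_le hμ (hmin _ hmem)
  by_contra hcon
  push_neg at hcon
  have hp : 0 < (S⁻¹) ^ 2 := by positivity
  nlinarith [mul_nonneg hp.le (neg_nonneg.mpr hcon)]


end AuxB

theorem stmt19 (n k : ℕ) (hk : k ≤ n) (A : Matrix (Fin n) (Fin n) ℝ)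
    (hsymm : A.IsSymm) :
    (CopositiveExactOrder A k ↔ SemimonotoneExactOrder A k) ∧
    (StrictlyCopositiveExactOrder A k ↔ StrictlySemimonotoneExactOrder A k) := by
  have hsub : ∀ s : Finset (Fin n), (PrincipalSubmatrix A s).IsSymm :=
    fun s => hsymm.submatrix _
  have key : ∀ s : Finset (Fin n),
      Copositive (PrincipalSubmatrix A s) ↔ SemiMonotone (PrincipalSubmatrix A s) :=
    fun s => ⟨aux_cop_to_semi _, aux_semi_to_cop _ (hsub s)⟩
  have key2 : ∀ s : Finset (Fin n), StrictlyCopositive (PrincipalSubmatrix A s) ↔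
      StrictlySemiMonotone (PrincipalSubmatrix A s) :=
    fun s => ⟨aux_scop_to_ssemi _, aux_ssemi_to_scop _ (hsub s)⟩
  constructor
  · constructor
    · rintro ⟨h1, h2⟩
      exact ⟨fun s hs => (key s).mp (h1 s hs), fun s hs h => h2 s hs ((key s).mpr h)⟩
    · rintro ⟨h1, h2⟩
      exact ⟨fun s hs => (key s).mpr (h1 s hs), fun s hs h => h2 s hs ((key s).mp h)⟩
  · constructor
    · rintro ⟨h1, h2⟩
      exact ⟨fun s hs => (key2 s).mp (h1 s hs), fun s hs h => h2 s hs ((key2 s).mpr h)⟩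
    · rintro ⟨h1, h2⟩
      exact ⟨fun s hs => (key2 s).mpr (h1 s hs), fun s hs h => h2 s hs ((key2 s).mp h)⟩
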